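/- Let y_1 < y_2 < ... < y_k be real numbers with 0 < y_1, y_k ≤ 2π, nondecreasing gaps y_1 ≤ y_2 − y_1 ≤ ... ≤ y_k − y_{k−1}, an index q with y_q ≤ π < y_{q+1}, and a := y_{q+1} − y_q < π. If (a_j)_{j=1}^{k} is a nonincreasing sequence of nonnegative reals, then ∑_{i=1}^{k} a_i sin(y_i) ≥ −a_{q+1} · sin(a/2). -/

import Mathlib

noncomputable def stmtFF (x t : ℝ) : ℝ := Real.sin (x/2) * Real.sin ((x+t)/2) / Real.sin (t/2)
noncomputable def stmtBB (x g : ℝ) : ℝ := (1 - Real.cos (x + g/2)) / (2 * Real.sin (g/2))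

lemma one_sub_cos' (θ : ℝ) : 1 - Real.cos θ = 2 * Real.sin (θ/2)^2 := by
  have h1 := Real.cos_two_mul (θ/2)
  have h2 := Real.sin_sq_add_cos_sq (θ/2)
  have h3 : 2 * (θ/2) = θ := by ring
  rw [h3] at h1
  nlinarith

lemma sin_half_pos {t : ℝ} (h0 : 0 < t) (h2 : t < 2*Real.pi) : 0 < Real.sin (t/2) :=
  Real.sin_pos_of_pos_of_lt_pi (by linarith) (by linarith)

lemma sin_mono_q1 {u v : ℝ} (hu : 0 ≤ u) (huv : u ≤ v) (hv : v ≤ Real.pi/2) :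
    Real.sin u ≤ Real.sin v := by
  rw [← Real.cos_pi_div_two_sub, ← Real.cos_pi_div_two_sub]
  exact Real.cos_le_cos_of_nonneg_of_le_pi (by linarith) (by linarith [Real.pi_pos]) (by linarith)

lemma stmtBB_nonneg {g : ℝ} (x : ℝ) (hg0 : 0 < g) (hg2 : g < 2*Real.pi) : 0 ≤ stmtBB x g := by
  unfold stmtBB
  have h1 := Real.cos_le_one (x + g/2)
  have h2 := sin_half_pos hg0 hg2
  apply div_nonneg (by linarith) (by linarith)

lemma stmtBB_sub (z g : ℝ) (hg : Real.sin (g/2) ≠ 0) :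
    stmtBB z g - stmtBB (z - g) g = Real.sin z := by
  have e1 : Real.cos (z + g/2) = Real.cos z * Real.cos (g/2) - Real.sin z * Real.sin (g/2) :=
    Real.cos_add z (g/2)
  have e2 : Real.cos (z - g + g/2) = Real.cos z * Real.cos (g/2) + Real.sin z * Real.sin (g/2) := by
    rw [show z - g + g/2 = z - g/2 by ring, Real.cos_sub]
  unfold stmtBB
  rw [e1, e2]
  field_simp
  ring

lemma stmtFF_sub (x γ : ℝ) (hγ : Real.sin (γ/2) ≠ 0) :
    stmtFF x γ - stmtFF (x - γ) γ = Real.sin x := by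
  have e1 : Real.sin ((x + γ)/2) = Real.sin (x/2) * Real.cos (γ/2) + Real.cos (x/2) * Real.sin (γ/2) := by
    rw [show (x+γ)/2 = x/2 + γ/2 by ring, Real.sin_add]
  have e2 : Real.sin ((x - γ + γ)/2) = Real.sin (x/2) := by norm_num
  have e3 : Real.sin ((x - γ)/2) = Real.sin (x/2) * Real.cos (γ/2) - Real.cos (x/2) * Real.sin (γ/2) := by
    rw [show (x-γ)/2 = x/2 - γ/2 by ring, Real.sin_sub]
  have e4 : Real.sin x = 2 * Real.sin (x/2) * Real.cos (x/2) := by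
    have := Real.sin_two_mul (x/2)
    rw [show 2*(x/2) = x by ring] at this
    linarith
  unfold stmtFF
  rw [e1, e2, e3, e4]
  field_simp
  ring

lemma stmtFF_anti (x : ℝ) {γ t : ℝ} (hγ0 : 0 < γ) (hγt : γ ≤ t) (ht : t < 2*Real.pi) :
    stmtFF x t ≤ stmtFF x γ := by
  have hsγ : 0 < Real.sin (γ/2) := sin_half_pos hγ0 (by linarith)
  have hst : 0 < Real.sin (t/2) := sin_half_pos (by linarith) ht
  have key : stmtFF x γ - stmtFF x t
      = Real.sin (x/2)^2 * Real.sin ((t - γ)/2) / (Real.sin (γ/2) * Real.sin (t/2)) := by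
    unfold stmtFF
    rw [show (x+γ)/2 = x/2 + γ/2 by ring, show (x+t)/2 = x/2 + t/2 by ring,
      show (t-γ)/2 = t/2 - γ/2 by ring, Real.sin_add, Real.sin_add, Real.sin_sub]
    field_simp
    ring
  have hnn : 0 ≤ Real.sin ((t - γ)/2) :=
    Real.sin_nonneg_of_nonneg_of_le_pi (by linarith) (by linarith)
  nlinarith [sq_nonneg (Real.sin (x/2)), mul_pos hsγ hst,
    div_nonneg (mul_nonneg (sq_nonneg (Real.sin (x/2))) hnn) (le_of_lt (mul_pos hsγ hst))]

lemma stmtFF_le_sin {z t : ℝ} (hz0 : 0 < z) (hzt : z ≤ t) (ht : t < 2*Real.pi) :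
    stmtFF z t ≤ Real.sin z := by
  have hst : 0 < Real.sin (t/2) := sin_half_pos (by linarith) ht
  have key : Real.sin z - stmtFF z t
      = Real.sin (z/2) * Real.sin ((t - z)/2) / Real.sin (t/2) := by
    have e4 : Real.sin z = 2 * Real.sin (z/2) * Real.cos (z/2) := by
      have := Real.sin_two_mul (z/2)
      rw [show 2*(z/2) = z by ring] at this
      linarith
    unfold stmtFF
    rw [show (z+t)/2 = z/2 + t/2 by ring, show (t-z)/2 = t/2 - z/2 by ring,
      Real.sin_add, Real.sin_sub, e4]
    field_simp
    ring
  have h1 : 0 ≤ Real.sin (z/2) :=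
    Real.sin_nonneg_of_nonneg_of_le_pi (by linarith) (by linarith)
  have h2 : 0 ≤ Real.sin ((t - z)/2) :=
    Real.sin_nonneg_of_nonneg_of_le_pi (by linarith) (by linarith)
  nlinarith [div_nonneg (mul_nonneg h1 h2) hst.le]

lemma stmtBB_form {z t : ℝ} (ht0 : 0 < t) : stmtBB z t = Real.sin (z/2 + t/4)^2 / Real.sin (t/2) := by
  unfold stmtBB
  rw [show z + t/2 = 2*(z/2 + t/4)*1 by ring]
  rw [show (2*(z/2+t/4)*1) = 2*(z/2+t/4) by ring]
  have := one_sub_cos' (2*(z/2+t/4))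
  rw [show 2*(z/2+t/4)/2 = z/2 + t/4 by ring] at this
  rw [this]
  ring

lemma sin_anti_q2 {u v : ℝ} (hu : Real.pi/2 ≤ u) (huv : u ≤ v) (hv : v ≤ Real.pi) :
    Real.sin v ≤ Real.sin u := by
  rw [← Real.sin_pi_sub v, ← Real.sin_pi_sub u]
  exact sin_mono_q1 (by linarith) (by linarith) (by linarith)

lemma stmtBB_anti {z g g' : ℝ} (hz : Real.pi ≤ z) (hg0 : 0 < g) (hgg' : g ≤ g')
    (hg' : g' ≤ Real.pi) (hz2 : z + g'/2 ≤ 2*Real.pi) : stmtBB z g' ≤ stmtBB z g := by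
  have hpi := Real.pi_pos
  rw [stmtBB_form hg0, stmtBB_form (lt_of_lt_of_le hg0 hgg')]
  have hα : Real.sin (z/2 + g'/4) ≤ Real.sin (z/2 + g/4) :=
    sin_anti_q2 (by linarith) (by linarith) (by linarith)
  have hα0 : 0 ≤ Real.sin (z/2 + g'/4) :=
    Real.sin_nonneg_of_nonneg_of_le_pi (by linarith) (by linarith)
  have hd1 : 0 < Real.sin (g/2) := sin_half_pos hg0 (by linarith)
  have hd2 : Real.sin (g/2) ≤ Real.sin (g'/2) :=
    sin_mono_q1 (by linarith) (by linarith) (by linarith)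
  exact div_le_div₀ (sq_nonneg _) (by nlinarith) hd1 hd2

lemma stmtFFBB (x A : ℝ) (hA0 : 0 < A) (hAπ : A < Real.pi) :
    -Real.sin (A/2) ≤ stmtFF x A - stmtBB x A := by
  have hpi := Real.pi_pos
  have hs : 0 < Real.sin (A/2) := sin_half_pos hA0 (by linarith)
  have key2 : 2 * (Real.sin (x/2) * Real.sin ((x+A)/2)) = Real.cos (A/2) - Real.cos (x + A/2) := by
    have h1 : Real.cos (A/2) = Real.cos ((x+A)/2) * Real.cos (x/2) + Real.sin ((x+A)/2) * Real.sin (x/2) := by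
      rw [← Real.cos_sub, show (x+A)/2 - x/2 = A/2 by ring]
    have h2 : Real.cos (x + A/2) = Real.cos ((x+A)/2) * Real.cos (x/2) - Real.sin ((x+A)/2) * Real.sin (x/2) := by
      rw [← Real.cos_add, show (x+A)/2 + x/2 = x + A/2 by ring]
    linarith
  have key : stmtFF x A - stmtBB x A = (Real.cos (A/2) - 1)/(2 * Real.sin (A/2)) := by
    have key2' : 2 * (Real.sin (x/2) * Real.sin ((x+A)/2)) = Real.cos (A/2) - Real.cos ((x*2 + A)/2) := by
      rw [show (x*2+A)/2 = x + A/2 by ring]; exact key2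
    unfold stmtFF stmtBB
    field_simp
    linear_combination key2'
  rw [key, le_div_iff₀ (by linarith : (0:ℝ) < 2 * Real.sin (A/2))]
  have sq := one_sub_cos' A
  have mono : Real.cos A ≤ Real.cos (A/2) :=
    Real.cos_le_cos_of_nonneg_of_le_pi (by linarith) (by linarith) (by linarith)
  nlinarith

lemma icc_split (j n : ℕ) (f : ℕ → ℝ) (h : j ≤ n) :
    ∑ i ∈ Finset.Icc j n, f i = f j + ∑ i ∈ Finset.Icc (j+1) n, f i := by
  rw [Finset.Icc_eq_cons_Ioc h, Finset.sum_cons, ← Finset.Icc_add_one_left_eq_Ioc]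

theorem stmt3 (k q : ℕ) (y : ℕ → ℝ) (hq1 : 1 ≤ q) (hqk : q < k)
    (hmono : ∀ i, 1 ≤ i → i < k → y i < y (i + 1))
    (hpos : 0 < y 1) (hlast : y k ≤ 2 * Real.pi)
    (hgap1 : y 1 ≤ y 2 - y 1)
    (hgaps : ∀ i, 2 ≤ i → i < k → y i - y (i - 1) ≤ y (i + 1) - y i)
    (hsplitq : y q ≤ Real.pi) (hsplitq1 : Real.pi < y (q + 1))
    (ha : y (q + 1) - y q < Real.pi)
    (a : ℕ → ℝ) (hann : ∀ i, 1 ≤ i → i ≤ k → 0 ≤ a i)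
    (hadec : ∀ i, 1 ≤ i → i < k → a (i + 1) ≤ a i) :
    -(a (q + 1) * Real.sin ((y (q + 1) - y q) / 2)) ≤
      ∑ i ∈ Finset.Icc 1 k, a i * Real.sin (y i) := by
  have hpi := Real.pi_pos
  have hA0 : 0 < y (q+1) - y q := sub_pos.mpr (lt_of_le_of_lt hsplitq hsplitq1)
  have hc0 : 0 < Real.sin ((y (q+1) - y q)/2) := sin_half_pos hA0 (by linarith)
  -- monotonicity of y
  have hyy : ∀ i j : ℕ, 1 ≤ i → i ≤ j → j ≤ k → y i ≤ y j := by
    intro i j h1 hij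
    induction j, hij using Nat.le_induction with
    | base => intro _; exact le_rfl
    | succ n hn ih =>
      intro hnk
      have h2 := hmono n (by omega) (by omega)
      have h3 := ih (by omega)
      linarith
  have hyk2π : ∀ i, 1 ≤ i → i ≤ k → y i ≤ 2*Real.pi :=
    fun i h1 h2 => le_trans (hyy i k h1 h2 le_rfl) hlast
  have hypos : ∀ i, 1 ≤ i → i ≤ k → 0 < y i :=
    fun i h1 h2 => lt_of_lt_of_le hpos (hyy 1 i le_rfl h1 h2)
  have hyπ : ∀ i, 1 ≤ i → i ≤ q → y i ≤ Real.pi :=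
    fun i h1 h2 => le_trans (hyy i q h1 h2 (le_of_lt hqk)) hsplitq
  have hyπ' : ∀ i, q+1 ≤ i → i ≤ k → Real.pi < y i :=
    fun i h1 h2 => lt_of_lt_of_le hsplitq1 (hyy (q+1) i (by omega) h1 h2)
  have hgapmono : ∀ i j, 1 ≤ i → i ≤ j → j < k → y (i+1) - y i ≤ y (j+1) - y j := by
    intro i j h1 hij
    induction j, hij using Nat.le_induction with
    | base => intro _; exact le_rfl
    | succ n hn ih =>
      intro hnk
      have h := hgaps (n+1) (by omega) (by omega)
      simp only [Nat.add_sub_cancel] at h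
      have h3 := ih (by omega)
      linarith
  have hy1gap : ∀ j, 1 ≤ j → j < k → y 1 ≤ y (j+1) - y j := by
    intro j h1 hj
    have h2 := hgapmono 1 j le_rfl h1 hj
    norm_num at h2
    linarith
  -- Claim D : positive side
  have hD : ∀ m, 1 ≤ m → ∀ t, m ≤ q → t < 2*Real.pi → (m = 1 → y 1 ≤ t) →
      (2 ≤ m → y m - y (m-1) ≤ t) →
      stmtFF (y m) t ≤ ∑ i ∈ Finset.Icc 1 m, Real.sin (y i) := by
    intro m hm
    induction m, hm using Nat.le_induction with
    | base =>
      intro t hq ht h1 _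
      rw [Finset.Icc_self, Finset.sum_singleton]
      exact stmtFF_le_sin hpos (h1 rfl) ht
    | succ m hm ih =>
      intro t hq ht _ h2
      have hmk : m < k := by omega
      have hγ0 : 0 < y (m+1) - y m := sub_pos.mpr (hmono m hm hmk)
      have hγt : y (m+1) - y m ≤ t := by
        have := h2 (by omega)
        simpa using this
      have ihm : stmtFF (y m) (y (m+1) - y m) ≤ ∑ i ∈ Finset.Icc 1 m, Real.sin (y i) := by
        apply ih (y (m+1) - y m) (by omega) (by linarith)
        · intro hm1
          rw [hm1]
          exact hy1gap 1 le_rfl (by omega)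
        · intro hm2
          exact hgaps m hm2 hmk
      have h1 := stmtFF_anti (y (m+1)) hγ0 hγt ht
      have h2' := stmtFF_sub (y (m+1)) (y (m+1) - y m)
        (ne_of_gt (sin_half_pos hγ0 (by linarith)))
      rw [show y (m+1) - (y (m+1) - y m) = y m by ring] at h2'
      rw [Finset.sum_Icc_succ_top (by omega : 1 ≤ m + 1) (fun i => Real.sin (y i))]
      linarith
  -- Claim C : negative side
  have hC : ∀ d j g, q+1 ≤ j → j + d ≤ k → 0 < g → g ≤ Real.pi →
      (0 < d → g ≤ y (j+1) - y j) →
      -stmtBB (y j - g) g ≤ ∑ i ∈ Finset.Icc j (j+d), Real.sin (y i) := by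
    intro d
    induction d with
    | zero =>
      intro j g hj hjk hg0 hgπ _
      have hBj : 0 ≤ stmtBB (y j) g := stmtBB_nonneg _ hg0 (by linarith)
      have hid := stmtBB_sub (y j) g (ne_of_gt (sin_half_pos hg0 (by linarith)))
      simp only [Nat.add_zero, Finset.Icc_self, Finset.sum_singleton]
      linarith
    | succ d ihd =>
      intro j g hj hjk hg0 hgπ hgle
      have hjk' : j < k := by omega
      have hπj : Real.pi < y j := hyπ' j hj (by omega)
      have hy1 : y (j+1) ≤ 2*Real.pi := hyk2π (j+1) (by omega) (by omega)
      have hg'0 : 0 < y (j+1) - y j := sub_pos.mpr (hmono j (by omega) hjk')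
      have hg'π : y (j+1) - y j ≤ Real.pi := by linarith
      have hgg' : g ≤ y (j+1) - y j := hgle (by omega)
      have hcond : 0 < d → y (j+1) - y j ≤ y (j+1+1) - y (j+1) := by
        intro hd0
        have h := hgaps (j+1) (by omega) (by omega)
        simpa using h
      have tail := ihd (j+1) (y (j+1) - y j) (by omega) (by omega) hg'0 hg'π hcond
      rw [show y (j+1) - (y (j+1) - y j) = y j by ring] at tail
      have hmono2 : stmtBB (y j) (y (j+1) - y j) ≤ stmtBB (y j) g :=
        stmtBB_anti (le_of_lt hπj) hg0 hgg' hg'π (by linarith)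
      have hid := stmtBB_sub (y j) g (ne_of_gt (sin_half_pos hg0 (by linarith)))
      have hE : j + (d+1) = j + 1 + d := by omega
      rw [hE, icc_split j (j+1+d) (fun i => Real.sin (y i)) (by omega)]
      linarith
  -- combined lower bound on partial sums past q
  have hDq : stmtFF (y q) (y (q+1) - y q) ≤ ∑ i ∈ Finset.Icc 1 q, Real.sin (y i) := by
    apply hD q hq1 _ le_rfl (by linarith)
    · intro hq1'
      rw [hq1']
      have h2 := hy1gap 1 le_rfl (by omega)
      simpa using h2
    · intro hq2
      exact hgaps q hq2 hqk
  have hBq0 : 0 ≤ stmtBB (y q) (y (q+1) - y q) := stmtBB_nonneg _ hA0 (by linarith)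
  have hS : ∀ n, q ≤ n → n ≤ k →
      stmtFF (y q) (y (q+1) - y q) - stmtBB (y q) (y (q+1) - y q)
        ≤ ∑ i ∈ Finset.Icc 1 n, Real.sin (y i) := by
    intro n hn hnk
    rcases eq_or_lt_of_le hn with h | h
    · rw [← h]
      linarith
    · have e : Finset.Icc 1 q ∪ Finset.Icc (q+1) n = Finset.Icc 1 n := by
        ext x
        simp only [Finset.mem_union, Finset.mem_Icc]
        omega
      have hdisj : Disjoint (Finset.Icc 1 q) (Finset.Icc (q+1) n) := by
        rw [Finset.disjoint_left]
        intro x hx hx'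
        simp only [Finset.mem_Icc] at hx hx'
        omega
      have hsum : ∑ i ∈ Finset.Icc 1 n, Real.sin (y i)
          = ∑ i ∈ Finset.Icc 1 q, Real.sin (y i) + ∑ i ∈ Finset.Icc (q+1) n, Real.sin (y i) := by
        rw [← e, Finset.sum_union hdisj]
      have hcond : 0 < n - (q+1) → y (q+1) - y q ≤ y (q+1+1) - y (q+1) := by
        intro hd
        have h2 := hgaps (q+1) (by omega) (by omega)
        simpa using h2
      have hCq := hC (n - (q+1)) (q+1) (y (q+1) - y q) le_rfl (by omega) hA0 (by linarith) hcond
      rw [show y (q+1) - (y (q+1) - y q) = y q by ring] at hCq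
      rw [show q+1 + (n - (q+1)) = n by omega] at hCq
      rw [hsum]
      linarith
  have hQ : -Real.sin ((y (q+1) - y q)/2)
      ≤ stmtFF (y q) (y (q+1) - y q) - stmtBB (y q) (y (q+1) - y q) :=
    stmtFFBB (y q) (y (q+1) - y q) hA0 ha
  have hSc : ∀ n, q ≤ n → n ≤ k →
      -Real.sin ((y (q+1) - y q)/2) ≤ ∑ i ∈ Finset.Icc 1 n, Real.sin (y i) :=
    fun n h1 h2 => le_trans hQ (hS n h1 h2)
  have hsin0 : ∀ i, 1 ≤ i → i ≤ q → 0 ≤ Real.sin (y i) :=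
    fun i h1 h2 => Real.sin_nonneg_of_nonneg_of_le_pi
      (le_of_lt (hypos i h1 (by omega))) (hyπ i h1 h2)
  have haa : ∀ i j, 1 ≤ i → i ≤ j → j ≤ k → a j ≤ a i := by
    intro i j h1 hij
    induction j, hij using Nat.le_induction with
    | base => intro _; exact le_rfl
    | succ n hn ih =>
      intro hnk
      exact le_trans (hadec n (by omega) (by omega)) (ih (by omega))
  -- weighted partial sums, by induction from q+1
  have hW : ∀ n, q+1 ≤ n → n ≤ k →
      a n * ((∑ i ∈ Finset.Icc 1 n, Real.sin (y i)) + Real.sin ((y (q+1) - y q)/2))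
        - a (q+1) * Real.sin ((y (q+1) - y q)/2)
      ≤ ∑ i ∈ Finset.Icc 1 n, a i * Real.sin (y i) := by
    intro n hn
    induction n, hn using Nat.le_induction with
    | base =>
      intro hk'
      have hbase : a (q+1) * (∑ i ∈ Finset.Icc 1 (q+1), Real.sin (y i))
          ≤ ∑ i ∈ Finset.Icc 1 (q+1), a i * Real.sin (y i) := by
        rw [Finset.mul_sum]
        apply Finset.sum_le_sum
        intro i hi
        simp only [Finset.mem_Icc] at hi
        by_cases hiq : i ≤ q
        · exact mul_le_mul_of_nonneg_right (haa i (q+1) hi.1 (by omega) hk')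
            (hsin0 i hi.1 hiq)
        · have hieq : i = q+1 := by omega
          rw [hieq]
      have e2 : a (q+1) * ((∑ i ∈ Finset.Icc 1 (q+1), Real.sin (y i)) + Real.sin ((y (q+1) - y q)/2))
          = a (q+1) * (∑ i ∈ Finset.Icc 1 (q+1), Real.sin (y i)) + a (q+1) * Real.sin ((y (q+1) - y q)/2) := by
        ring
      linarith
    | succ n hn ih =>
      intro hk'
      have hprev := ih (by omega)
      have hSn := hSc n (by omega) (by omega)
      have hstep : a (n+1) ≤ a n := hadec n (by omega) (by omega)
      have h1 : a (n+1) * ((∑ i ∈ Finset.Icc 1 n, Real.sin (y i)) + Real.sin ((y (q+1) - y q)/2))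
          ≤ a n * ((∑ i ∈ Finset.Icc 1 n, Real.sin (y i)) + Real.sin ((y (q+1) - y q)/2)) :=
        mul_le_mul_of_nonneg_right hstep (by linarith)
      rw [Finset.sum_Icc_succ_top (by omega : 1 ≤ n + 1) (fun i => Real.sin (y i)),
        Finset.sum_Icc_succ_top (by omega : 1 ≤ n + 1) (fun i => a i * Real.sin (y i))]
      have e : a (n+1) * (((∑ i ∈ Finset.Icc 1 n, Real.sin (y i)) + Real.sin (y (n+1))) + Real.sin ((y (q+1) - y q)/2))
          = a (n+1) * ((∑ i ∈ Finset.Icc 1 n, Real.sin (y i)) + Real.sin ((y (q+1) - y q)/2))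
            + a (n+1) * Real.sin (y (n+1)) := by
        ring
      linarith
  have hfin := hW k (by omega) le_rfl
  have hSk := hSc k (by omega) le_rfl
  have hak : 0 ≤ a k := hann k (by omega) le_rfl
  have hnn : 0 ≤ a k * ((∑ i ∈ Finset.Icc 1 k, Real.sin (y i)) + Real.sin ((y (q+1) - y q)/2)) :=
    mul_nonneg hak (by linarith)
  linarith
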